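/- arXiv:2003.13598 — 2 statements merged into one kernel-verified Lean document; each statement's English description precedes it below -/
import Mathlib

section
/- Let G be a connected bipartite graph with bipartition (A,B), with every vertex in A of degree a ≥ 2 and every vertex in B of degree b ≥ a. If for every pair of edges e, f of G the graphs G − e and G − f are isomorphic, then G is edge-transitive. -/
open MeasureTheory Finset Filter
open scoped Classical

lemma iso_degree {V W : Type*} [Fintype V] [Fintype W] {G : SimpleGraph V} {H : SimpleGraph W}
    (f : G ≃g H) (v : V) : H.degree (f v) = G.degree v := by
  rw [← SimpleGraph.card_neighborSet_eq_degree, ← SimpleGraph.card_neighborSet_eq_degree]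
  exact Fintype.card_congr (f.mapNeighborSet v).symm

lemma nbr_del_self {V : Type*} [Fintype V] (G : SimpleGraph V) {u v : V} (h : G.Adj u v) :
    (G.deleteEdges {s(u,v)}).neighborFinset u = G.neighborFinset u \ {v} := by
  ext z
  simp only [SimpleGraph.mem_neighborFinset, SimpleGraph.deleteEdges_adj, Set.mem_singleton_iff,
    Finset.mem_sdiff, Finset.mem_singleton]
  constructor
  · rintro ⟨hz, h2⟩; exact ⟨hz, fun hzv => h2 (by rw [hzv])⟩
  · rintro ⟨hz, h2⟩
    refine ⟨hz, fun hs => ?_⟩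
    rw [Sym2.eq_iff] at hs
    rcases hs with ⟨-, h3⟩ | ⟨h3, h4⟩
    · exact h2 h3
    · exact G.irrefl (h4 ▸ hz)

lemma degree_del_self {V : Type*} [Fintype V] (G : SimpleGraph V) {u v : V} (h : G.Adj u v) :
    (G.deleteEdges {s(u,v)}).degree u = G.degree u - 1 := by
  rw [← SimpleGraph.card_neighborFinset_eq_degree, ← SimpleGraph.card_neighborFinset_eq_degree,
    nbr_del_self G h, Finset.card_sdiff_of_subset (by simpa using h)]
  simp

lemma degree_del_self' {V : Type*} [Fintype V] (G : SimpleGraph V) {u v : V} (h : G.Adj u v) :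
    (G.deleteEdges {s(u,v)}).degree v = G.degree v - 1 := by
  have : ({s(u,v)} : Set (Sym2 V)) = {s(v,u)} := by rw [Sym2.eq_swap]
  convert degree_del_self G h.symm using 3

lemma degree_del_other {V : Type*} [Fintype V] (G : SimpleGraph V) {u v w : V}
    (hwu : w ≠ u) (hwv : w ≠ v) :
    (G.deleteEdges {s(u,v)}).degree w = G.degree w := by
  rw [← SimpleGraph.card_neighborFinset_eq_degree, ← SimpleGraph.card_neighborFinset_eq_degree]
  congr 1
  ext z
  simp only [SimpleGraph.mem_neighborFinset, SimpleGraph.deleteEdges_adj, Set.mem_singleton_iff,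
  ]
  constructor
  · exact fun h => h.1
  · intro h
    refine ⟨h, fun hs => ?_⟩
    rw [Sym2.eq_iff] at hs
    rcases hs with ⟨h1, -⟩ | ⟨h1, -⟩
    · exact hwu h1
    · exact hwv h1

lemma key_lemma {V : Type} [Fintype V] (G : SimpleGraph V) (A B : Set V)
    (hcover : ∀ v, v ∈ A ∨ v ∈ B) (hdisj : ∀ v, ¬(v ∈ A ∧ v ∈ B))
    (hbip : ∀ u v, G.Adj u v → (u ∈ A ∧ v ∈ B) ∨ (u ∈ B ∧ v ∈ A))
    (a b : ℕ) (ha2 : 2 ≤ a) (hab : a ≤ b)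
    (hdegA : ∀ u ∈ A, G.degree u = a) (hdegB : ∀ v ∈ B, G.degree v = b)
    (u v x y : V) (hu : u ∈ A) (hv : v ∈ B) (hx : x ∈ A) (hy : y ∈ B)
    (huv : G.Adj u v) (hxy : G.Adj x y)
    (ψ : G.deleteEdges {s(u,v)} ≃g G.deleteEdges {s(x,y)}) :
    ∃ φ : G ≃g G, Sym2.map φ s(u,v) = s(x,y) := by
  set Ge := G.deleteEdges {s(u,v)} with hGe
  set Gf := G.deleteEdges {s(x,y)} with hGf
  -- helper: membership in parts from adjacency
  have memB : ∀ p q, G.Adj p q → p ∈ A → q ∈ B := by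
    intro p q h hp
    rcases hbip p q h with ⟨-, h2⟩ | ⟨h1, -⟩
    · exact h2
    · exact absurd ⟨hp, h1⟩ (hdisj p)
  have memA : ∀ p q, G.Adj p q → p ∈ B → q ∈ A := by
    intro p q h hp
    rcases hbip p q h with ⟨h1, -⟩ | ⟨-, h2⟩
    · exact absurd ⟨h1, hp⟩ (hdisj p)
    · exact h2
  -- degrees in Ge
  have hdu : Ge.degree u = a - 1 := by
    exact (degree_del_self G huv).trans (by rw [hdegA u hu])
  have hdv : Ge.degree v = b - 1 := by
    exact (degree_del_self' G huv).trans (by rw [hdegB v hv])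
  have hdx : Gf.degree x = a - 1 := by
    exact (degree_del_self G hxy).trans (by rw [hdegA x hx])
  have hdy : Gf.degree y = b - 1 := by
    exact (degree_del_self' G hxy).trans (by rw [hdegB y hy])
  have hdother : ∀ w, w ≠ x → w ≠ y → Gf.degree w = G.degree w := fun w h1 h2 =>
    degree_del_other G h1 h2
  have hdotherE : ∀ w, w ≠ u → w ≠ v → Ge.degree w = G.degree w := fun w h1 h2 =>
    degree_del_other G h1 h2
  -- Step 1 : ψ u ∈ {x, y}
  have hψu : ψ u = x ∨ ψ u = y := by
    by_contra hc
    push_neg at hc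
    obtain ⟨h1, h2⟩ := hc
    have hd : Gf.degree (ψ u) = a - 1 := by rw [← hdu]; convert iso_degree ψ u
    rw [hdother _ h1 h2] at hd
    rcases hcover (ψ u) with hw | hw
    · rw [hdegA _ hw] at hd; omega
    · rw [hdegB _ hw] at hd; omega
  -- Step 2 : ψ v ∈ {x, y}
  have hψv : ψ v = x ∨ ψ v = y := by
    by_contra hc
    push_neg at hc
    obtain ⟨h1, h2⟩ := hc
    have hd : Gf.degree (ψ v) = b - 1 := by rw [← hdv]; convert iso_degree ψ v
    rw [hdother _ h1 h2] at hd
    rcases hcover (ψ v) with hw | hw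
    swap
    · rw [hdegB _ hw] at hd; omega
    -- ψ v ∈ A, so a = b - 1
    rw [hdegA _ hw] at hd
    -- v has at least two neighbors p ≠ q in Ge, all mapped to y : contradiction
    have hcard : 1 < (Ge.neighborFinset v).card := by
      rw [SimpleGraph.card_neighborFinset_eq_degree, hdv]; omega
    obtain ⟨p, hp, q, hq, hpq⟩ := Finset.one_lt_card.mp hcard
    rw [SimpleGraph.mem_neighborFinset] at hp hq
    have key : ∀ r, Ge.Adj v r → ψ r = y := by
      intro r hr
      have hGr : G.Adj v r := (SimpleGraph.deleteEdges_adj.mp hr).1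
      have hru : r ≠ u := by
        rintro rfl
        exact (SimpleGraph.deleteEdges_adj.mp hr).2 (by rw [Sym2.eq_swap]; exact rfl)
      have hrv : r ≠ v := hGr.ne'
      have hrA : r ∈ A := memA v r hGr hv
      have hdr : Gf.degree (ψ r) = a := by
        rw [← hdegA r hrA, ← hdotherE r hru hrv]; convert iso_degree ψ r
      -- ψ r adjacent to ψ v in Gf
      have hadj : Gf.Adj (ψ v) (ψ r) := ψ.map_adj_iff.mpr hr
      have hGadj : G.Adj (ψ v) (ψ r) := (SimpleGraph.deleteEdges_adj.mp hadj).1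
      have hψrB : ψ r ∈ B := memB _ _ hGadj hw
      by_contra hne
      have hne2 : ψ r ≠ x := by
        rintro heq
        exact hdisj x ⟨hx, heq ▸ hψrB⟩
      rw [hdother _ hne2 hne, hdegB _ hψrB] at hdr
      omega
    exact hpq (ψ.injective (by rw [key p hp, key q hq]))
  -- Step 3 : the pair {ψ u, ψ v} = {x, y}
  have hne : ψ u ≠ ψ v := fun h => huv.ne (ψ.injective h)
  have hpair : (ψ u = x ∧ ψ v = y) ∨ (ψ u = y ∧ ψ v = x) := by
    rcases hψu with h1 | h1 <;> rcases hψv with h2 | h2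
    · exact absurd (h1.trans h2.symm) hne
    · exact Or.inl ⟨h1, h2⟩
    · exact Or.inr ⟨h1, h2⟩
    · exact absurd (h1.trans h2.symm) hne
  -- Step 4 : build the automorphism
  have hmain : ∀ p q : V, G.Adj (ψ p) (ψ q) ↔ G.Adj p q := by
    intro p q
    constructor
    · intro h
      by_cases hc : s(ψ p, ψ q) = s(x, y)
      · rw [Sym2.eq_iff] at hc
        rcases hpair with ⟨e1, e2⟩ | ⟨e1, e2⟩ <;> rcases hc with ⟨f1, f2⟩ | ⟨f1, f2⟩
        · have : p = u := ψ.injective (f1.trans e1.symm)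
          have : q = v := ψ.injective (f2.trans e2.symm)
          subst_vars; exact huv
        · have : p = v := ψ.injective (f1.trans e2.symm)
          have : q = u := ψ.injective (f2.trans e1.symm)
          subst_vars; exact huv.symm
        · have : p = v := ψ.injective (f1.trans e2.symm)
          have : q = u := ψ.injective (f2.trans e1.symm)
          subst_vars; exact huv.symm
        · have : p = u := ψ.injective (f1.trans e1.symm)
          have : q = v := ψ.injective (f2.trans e2.symm)
          subst_vars; exact huv
      · have : Gf.Adj (ψ p) (ψ q) := SimpleGraph.deleteEdges_adj.mpr ⟨h, hc⟩
        exact (SimpleGraph.deleteEdges_adj.mp (ψ.map_adj_iff.mp this)).1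
    · intro h
      by_cases hc : s(p, q) = s(u, v)
      · rw [Sym2.eq_iff] at hc
        rcases hc with ⟨f1, f2⟩ | ⟨f1, f2⟩ <;> subst f1 <;> subst f2 <;>
          rcases hpair with ⟨e1, e2⟩ | ⟨e1, e2⟩ <;> rw [e1, e2]
        · exact hxy
        · exact hxy.symm
        · exact hxy.symm
        · exact hxy
      · have : Ge.Adj p q := SimpleGraph.deleteEdges_adj.mpr ⟨h, hc⟩
        exact (SimpleGraph.deleteEdges_adj.mp (ψ.map_adj_iff.mpr this)).1
  refine ⟨⟨ψ.toEquiv, hmain _ _⟩, ?_⟩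
  rw [Sym2.map_pair_eq]
  rcases hpair with ⟨e1, e2⟩ | ⟨e1, e2⟩
  · rw [show ((⟨ψ.toEquiv, hmain _ _⟩ : G ≃g G) : V → V) = ⇑ψ from rfl, e1, e2]
  · rw [show ((⟨ψ.toEquiv, hmain _ _⟩ : G ≃g G) : V → V) = ⇑ψ from rfl, e1, e2, Sym2.eq_swap]

/-- Homomorphism density of a symmetric kernel `h` in a finite graph `G`:
`t_G(h) = ∫_{[0,1]^V} ∏_{{i,j} ∈ E(G)} h(x_i, x_j) dx`. -/
noncomputable def tG {V : Type} [Fintype V] (G : SimpleGraph V) (h : ℝ → ℝ → ℝ)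
    (hsym : ∀ a b, h a b = h b a) : ℝ :=
  ∫ x : V → Set.Icc (0:ℝ) 1,
    ∏ e ∈ G.edgeFinset, Sym2.lift ⟨fun i j => h (x i) (x j), fun _ _ => hsym _ _⟩ e


/-- if all single-edge deletions of a connected biregular bipartite graph with
minimum degree at least 2 are pairwise isomorphic, then the graph is edge-transitive. -/
theorem edge_transitive_of_deletions_isomorphic {V : Type} [Fintype V] (G : SimpleGraph V)
    (A B : Set V)
    (hcover : ∀ v, v ∈ A ∨ v ∈ B) (hdisj : ∀ v, ¬(v ∈ A ∧ v ∈ B))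
    (hbip : ∀ u v, G.Adj u v → (u ∈ A ∧ v ∈ B) ∨ (u ∈ B ∧ v ∈ A))
    (a b : ℕ) (ha2 : 2 ≤ a) (hab : a ≤ b)
    (hdegA : ∀ u ∈ A, G.degree u = a) (hdegB : ∀ v ∈ B, G.degree v = b)
    (hconn : G.Connected)
    (hiso : ∀ e ∈ G.edgeSet, ∀ f ∈ G.edgeSet,
      Nonempty (G.deleteEdges {e} ≃g G.deleteEdges {f})) :
    ∀ e ∈ G.edgeSet, ∀ f ∈ G.edgeSet, ∃ φ : G ≃g G, Sym2.map φ e = f := by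
  intro e he f hf
  obtain ⟨ψ⟩ := hiso e he f hf
  induction e using Sym2.ind with
  | _ u v =>
  induction f using Sym2.ind with
  | _ x y =>
  rw [SimpleGraph.mem_edgeSet] at he hf
  rcases hbip u v he with ⟨hu, hv⟩ | ⟨hu, hv⟩ <;>
    rcases hbip x y hf with ⟨hx, hy⟩ | ⟨hx, hy⟩
  · exact key_lemma G A B hcover hdisj hbip a b ha2 hab hdegA hdegB u v x y hu hv hx hy he hf ψ
  · rw [show (s(x,y) : Sym2 V) = s(y,x) from Sym2.eq_swap] at ψ ⊢
    exact key_lemma G A B hcover hdisj hbip a b ha2 hab hdegA hdegB u v y x hu hv hy hx he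
      hf.symm ψ
  · rw [show (s(u,v) : Sym2 V) = s(v,u) from Sym2.eq_swap] at ψ ⊢
    exact key_lemma G A B hcover hdisj hbip a b ha2 hab hdegA hdegB v u x y hv hu hx hy he.symm
      hf ψ
  · rw [show (s(u,v) : Sym2 V) = s(v,u) from Sym2.eq_swap] at ψ ⊢
    rw [show (s(x,y) : Sym2 V) = s(y,x) from Sym2.eq_swap] at ψ ⊢
    exact key_lemma G A B hcover hdisj hbip a b ha2 hab hdegA hdegB v u y x hv hu hy hx he.symm
      hf.symm ψ
end

section
/- Let G be a finite graph with edges e_1,...,e_k and suppose t_G(h_1,...,h_k)^k ≤ ∏_{l=1}^k t_G(h_l) for all bounded measurable symmetric nonnegative h_1,...,h_k (G weakly norming), and suppose additionally that graphs F, F' satisfying t_F(h) = t_{F'}(h) for all nonnegative bounded symmetric measurable h are isomorphic. Then all the single-edge-deleted graphs G − e_1, ..., G − e_k are pairwise isomorphic. -/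
open MeasureTheory Finset Filter
open scoped Classical

/-- Multilinear homomorphism density: edge `e` carries the symmetric kernel `H e`. -/
noncomputable def tGm {V : Type} [Fintype V] (G : SimpleGraph V) (H : Sym2 V → ℝ → ℝ → ℝ)
    (hsym : ∀ e a b, H e a b = H e b a) : ℝ :=
  ∫ x : V → Set.Icc (0:ℝ) 1,
    ∏ e ∈ G.edgeFinset, Sym2.lift ⟨fun i j => H e (x i) (x j), fun _ _ => hsym e _ _⟩ e



open scoped Topology

set_option linter.unusedSectionVars false

section Aux
variable {V : Type} [Fintype V]

/-- Symmetrized kernel evaluation on an unordered pair. -/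
noncomputable def kerf (h : ℝ → ℝ → ℝ) (x : V → Set.Icc (0:ℝ) 1) (e : Sym2 V) : ℝ :=
  Sym2.lift ⟨fun i j => (h (x i) (x j) + h (x j) (x i)) / 2,
    fun a b => by dsimp only; rw [add_comm]⟩ e

lemma kerf_mk (h : ℝ → ℝ → ℝ) (x : V → Set.Icc (0:ℝ) 1) (i j : V) :
    kerf h x s(i,j) = (h (x i) (x j) + h (x j) (x i)) / 2 := by
  simp [kerf]

lemma kerf_eq_lift (h : ℝ → ℝ → ℝ) (hsym : ∀ a b, h a b = h b a)
    (x : V → Set.Icc (0:ℝ) 1) (e : Sym2 V) :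
    Sym2.lift ⟨fun i j => h (x i) (x j), fun _ _ => hsym _ _⟩ e = kerf h x e := by
  induction e using Sym2.ind with
  | _ i j =>
    rw [kerf_mk, Sym2.lift_mk, hsym (x j) (x i)]
    ring

lemma kerf_measurable (h : ℝ → ℝ → ℝ) (hm : Measurable (Function.uncurry h)) (e : Sym2 V) :
    Measurable fun x : V → Set.Icc (0:ℝ) 1 => kerf h x e := by
  induction e using Sym2.ind with
  | _ i j =>
    simp only [kerf_mk]
    have m1 : Measurable fun x : V → Set.Icc (0:ℝ) 1 => ((x i : ℝ), (x j : ℝ)) :=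
      (measurable_subtype_coe.comp (measurable_pi_apply i)).prodMk
        (measurable_subtype_coe.comp (measurable_pi_apply j))
    have m2 : Measurable fun x : V → Set.Icc (0:ℝ) 1 => ((x j : ℝ), (x i : ℝ)) :=
      (measurable_subtype_coe.comp (measurable_pi_apply j)).prodMk
        (measurable_subtype_coe.comp (measurable_pi_apply i))
    exact ((hm.comp m1).add (hm.comp m2)).div_const 2

lemma kerf_abs_le (h : ℝ → ℝ → ℝ) (M : ℝ) (hM : ∀ a b, |h a b| ≤ M)
    (x : V → Set.Icc (0:ℝ) 1) (e : Sym2 V) : |kerf h x e| ≤ M := by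
  induction e using Sym2.ind with
  | _ i j =>
    rw [kerf_mk]
    have h1 := hM (x i) (x j)
    have h2 := hM (x j) (x i)
    have h3 := abs_add_le (h (x i) (x j)) (h (x j) (x i))
    rw [abs_div]
    have : |(2:ℝ)| = 2 := by norm_num
    rw [this]
    linarith

lemma kerf_ge (h : ℝ → ℝ → ℝ) (c : ℝ) (hc : ∀ a b, c ≤ h a b)
    (x : V → Set.Icc (0:ℝ) 1) (e : Sym2 V) : c ≤ kerf h x e := by
  induction e using Sym2.ind with
  | _ i j =>
    rw [kerf_mk]
    have h1 := hc (x i) (x j)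
    have h2 := hc (x j) (x i)
    linarith

lemma kerf_add_const (h : ℝ → ℝ → ℝ) (δ : ℝ) (x : V → Set.Icc (0:ℝ) 1) (e : Sym2 V) :
    kerf (fun a b => h a b + δ) x e = kerf h x e + δ := by
  induction e using Sym2.ind with
  | _ i j =>
    rw [kerf_mk, kerf_mk]
    ring

/-- Proof-free homomorphism density over an arbitrary finite set of pairs. -/
noncomputable def J (s : Finset (Sym2 V)) (h : ℝ → ℝ → ℝ) : ℝ :=
  ∫ x : V → Set.Icc (0:ℝ) 1, ∏ e ∈ s, kerf h x e

lemma integrable_prod_kerf (s : Finset (Sym2 V)) (h : ℝ → ℝ → ℝ)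
    (hm : Measurable (Function.uncurry h)) (hb : ∃ M, ∀ a b, |h a b| ≤ M) :
    Integrable (fun x : V → Set.Icc (0:ℝ) 1 => ∏ e ∈ s, kerf h x e) := by
  obtain ⟨M, hM⟩ := hb
  have hM0 : 0 ≤ M := le_trans (abs_nonneg _) (hM 0 0)
  have meas : Measurable fun x : V → Set.Icc (0:ℝ) 1 => ∏ e ∈ s, kerf h x e :=
    Finset.measurable_prod s fun e _ => kerf_measurable h hm e
  refine (integrable_const (M ^ s.card)).mono' meas.aestronglyMeasurable
    (Filter.Eventually.of_forall fun x => ?_)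
  rw [Real.norm_eq_abs, Finset.abs_prod]
  calc ∏ e ∈ s, |kerf h x e| ≤ ∏ _e ∈ s, M :=
        Finset.prod_le_prod (fun e _ => abs_nonneg _) (fun e _ => kerf_abs_le h M hM x e)
    _ = M ^ s.card := Finset.prod_const M
lemma tG_eq (G : SimpleGraph V) (h : ℝ → ℝ → ℝ) (hsym : ∀ a b, h a b = h b a) :
    tG G h hsym = J G.edgeFinset h := by
  unfold tG J
  congr 1
  funext x
  exact Finset.prod_congr rfl fun e _ => kerf_eq_lift h hsym x e

lemma tGm_eq (G : SimpleGraph V) (H : Sym2 V → ℝ → ℝ → ℝ) (hs : ∀ e a b, H e a b = H e b a) :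
    tGm G H hs = ∫ x : V → Set.Icc (0:ℝ) 1, ∏ e ∈ G.edgeFinset, kerf (H e) x e := by
  unfold tGm
  congr 1
  funext x
  exact Finset.prod_congr rfl fun e _ => kerf_eq_lift (H e) (hs e) x e

lemma J_add_const (s : Finset (Sym2 V)) (h : ℝ → ℝ → ℝ)
    (hm : Measurable (Function.uncurry h)) (hb : ∃ M, ∀ a b, |h a b| ≤ M) (δ : ℝ) :
    J s (fun a b => h a b + δ) = ∑ T ∈ s.powerset, J T h * δ ^ ((s \ T).card) := by
  unfold J
  have key : (fun x : V → Set.Icc (0:ℝ) 1 => ∏ e ∈ s, kerf (fun a b => h a b + δ) x e)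
      = fun x => ∑ T ∈ s.powerset, (∏ e ∈ T, kerf h x e) * δ ^ ((s \ T).card) := by
    funext x
    rw [Finset.prod_congr rfl fun e _ => kerf_add_const h δ x e]
    rw [Finset.prod_add]
    exact Finset.sum_congr rfl fun T _ => by rw [Finset.prod_const δ]
  rw [key, integral_finset_sum _
    (fun T _ => (integrable_prod_kerf T h hm hb).mul_const _)]
  exact Finset.sum_congr rfl fun T _ => integral_mul_const _ _

lemma J_ge_pow (s : Finset (Sym2 V)) (h : ℝ → ℝ → ℝ)
    (hm : Measurable (Function.uncurry h)) (hb : ∃ M, ∀ a b, |h a b| ≤ M)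
    (δ : ℝ) (hδ : 0 ≤ δ) (hge : ∀ a b, δ ≤ h a b) : δ ^ s.card ≤ J s h := by
  have int := integrable_prod_kerf s h hm hb
  have : δ ^ s.card = ∫ _x : V → Set.Icc (0:ℝ) 1, δ ^ s.card := by simp
  rw [this]
  refine integral_mono (integrable_const _) int fun x => ?_
  rw [← Finset.prod_const]
  exact Finset.prod_le_prod (fun e _ => hδ) (fun e _ => kerf_ge h δ hge x e)

lemma sum_pow_zero (s : Finset (Sym2 V)) (h : ℝ → ℝ → ℝ) :
    ∑ T ∈ s.powerset, J T h * (0:ℝ) ^ ((s \ T).card) = J s h := by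
  rw [Finset.sum_eq_single s]
  · simp
  · intro T hT hTne
    have hsub : T ⊆ s := Finset.mem_powerset.mp hT
    have : (s \ T).Nonempty := by
      rw [Finset.sdiff_nonempty]
      intro hss
      exact hTne (Finset.Subset.antisymm hsub hss)
    rw [zero_pow (Finset.card_ne_zero.mpr this), mul_zero]
  · intro hs
    exact absurd (Finset.mem_powerset_self s) hs

lemma edgeFinset_delete (G : SimpleGraph V) (e : Sym2 V) :
    (G.deleteEdges {e}).edgeFinset = G.edgeFinset.erase e := by
  ext f
  simp only [SimpleGraph.mem_edgeFinset, SimpleGraph.edgeSet_deleteEdges,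
    Finset.mem_erase, Set.mem_diff, Set.mem_singleton_iff]
  tauto
lemma hoelder_ineq (G : SimpleGraph V)
    (hwn : ∀ (H : Sym2 V → ℝ → ℝ → ℝ) (hs : ∀ e a b, H e a b = H e b a),
      (∀ e, Measurable (Function.uncurry (H e))) → (∀ e, ∃ M, ∀ x y, |H e x y| ≤ M) →
      (∀ e x y, 0 ≤ H e x y) →
      tGm G H hs ^ G.edgeFinset.card ≤ ∏ e ∈ G.edgeFinset, tG G (H e) (hs e))
    (e : Sym2 V) (he : e ∈ G.edgeFinset)
    (W : ℝ → ℝ → ℝ) (Wsym : ∀ a b, W a b = W b a)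
    (Wm : Measurable (Function.uncurry W)) (M : ℝ) (WM : ∀ a b, |W a b| ≤ M)
    (δ : ℝ) (hδ : 0 < δ) (Wge : ∀ a b, δ ≤ W a b)
    (s : ℝ) (hs : |s| ≤ δ) :
    (J G.edgeFinset W + s * J (G.edgeFinset.erase e) W) ^ G.edgeFinset.card ≤
      (∑ T ∈ G.edgeFinset.powerset, J T W * s ^ ((G.edgeFinset \ T).card)) *
        (J G.edgeFinset W) ^ (G.edgeFinset.card - 1) := by
  set Hs : Sym2 V → ℝ → ℝ → ℝ := fun e' a b => W a b + (if e' = e then s else 0) with hHs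
  have hssym : ∀ e' a b, Hs e' a b = Hs e' b a := by
    intro e' a b
    simp only [hHs]
    rw [Wsym a b]
  have hsm : ∀ e', Measurable (Function.uncurry (Hs e')) := fun e' => Wm.add_const _
  have hsb : ∀ e', ∃ N, ∀ x y, |Hs e' x y| ≤ N := by
    intro e'
    refine ⟨M + δ, fun a b => ?_⟩
    have hite : |(if e' = e then s else 0 : ℝ)| ≤ δ := by
      split
      · exact hs
      · simpa using hδ.le
    calc |Hs e' a b| ≤ |W a b| + |(if e' = e then s else 0 : ℝ)| := abs_add_le _ _
      _ ≤ M + δ := add_le_add (WM a b) hite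
  have hsnn : ∀ e' x y, 0 ≤ Hs e' x y := by
    intro e' a b
    have h1 : -δ ≤ (if e' = e then s else 0 : ℝ) := by
      split
      · linarith [(abs_le.mp hs).1]
      · linarith
    have h2 := Wge a b
    simp only [hHs]
    linarith
  have main := hwn Hs hssym hsm hsb hsnn
  rw [tGm_eq] at main
  have lhs_eq : (fun x : V → Set.Icc (0:ℝ) 1 => ∏ e' ∈ G.edgeFinset, kerf (Hs e') x e')
      = fun x => (∏ e' ∈ G.edgeFinset, kerf W x e')
          + s * ∏ e' ∈ G.edgeFinset.erase e, kerf W x e' := by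
    funext x
    rw [← Finset.mul_prod_erase G.edgeFinset (fun e' => kerf (Hs e') x e') he,
        ← Finset.mul_prod_erase G.edgeFinset (fun e' => kerf W x e') he]
    have h1 : kerf (Hs e) x e = kerf W x e + s := by
      have hfun : Hs e = fun a b => W a b + s := by
        funext a b; simp [hHs]
      rw [hfun, kerf_add_const]
    have h2 : ∀ e' ∈ G.edgeFinset.erase e, kerf (Hs e') x e' = kerf W x e' := by
      intro e' he'
      have hne : e' ≠ e := Finset.ne_of_mem_erase he'
      have hfun : Hs e' = W := by
        funext a b; simp [hHs, hne]
      rw [hfun]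
    rw [Finset.prod_congr rfl h2, h1]
    ring
  rw [lhs_eq] at main
  rw [integral_add (integrable_prod_kerf _ W Wm ⟨M, WM⟩)
    ((integrable_prod_kerf _ W Wm ⟨M, WM⟩).const_mul s), integral_const_mul s _] at main
  have rhs_eq : ∏ e' ∈ G.edgeFinset, tG G (Hs e') (hssym e')
      = (∑ T ∈ G.edgeFinset.powerset, J T W * s ^ ((G.edgeFinset \ T).card)) *
          (J G.edgeFinset W) ^ (G.edgeFinset.card - 1) := by
    rw [← Finset.mul_prod_erase G.edgeFinset _ he]
    have f1 : tG G (Hs e) (hssym e)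
        = ∑ T ∈ G.edgeFinset.powerset, J T W * s ^ ((G.edgeFinset \ T).card) := by
      rw [tG_eq]
      have hfun : Hs e = fun a b => W a b + s := by
        funext a b; simp [hHs]
      rw [show J G.edgeFinset (Hs e) = J G.edgeFinset (fun a b => W a b + s) from by rw [hfun]]
      exact J_add_const _ W Wm ⟨M, WM⟩ s
    have f2 : ∀ e' ∈ G.edgeFinset.erase e, tG G (Hs e') (hssym e') = J G.edgeFinset W := by
      intro e' he'
      have hne : e' ≠ e := Finset.ne_of_mem_erase he'
      rw [tG_eq]
      have hfun : Hs e' = W := by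
        funext a b; simp [hHs, hne]
      rw [hfun]
    rw [Finset.prod_congr rfl f2, f1, Finset.prod_const, Finset.card_erase_of_mem he]
  rw [rhs_eq] at main
  exact main
lemma deriv_step (P : ℝ → ℝ) (c D : ℝ) (k : ℕ) (S : ℝ)
    (hP : HasDerivAt P S 0) (hP0 : P 0 = c) (hk : k ≠ 0)
    (δ : ℝ) (hδ : 0 < δ)
    (hineq : ∀ s, |s| ≤ δ → (c + s * D) ^ k ≤ P s * c ^ (k - 1)) :
    (k : ℝ) * c ^ (k - 1) * D = S * c ^ (k - 1) := by
  set f : ℝ → ℝ := fun s => P s * c ^ (k - 1) - (c + s * D) ^ k with hf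
  have hck : c * c ^ (k - 1) = c ^ k := by
    rw [← pow_succ', Nat.sub_add_cancel (Nat.one_le_iff_ne_zero.mpr hk)]
  have hf0 : f 0 = 0 := by
    simp only [hf, hP0, zero_mul, add_zero, hck]
    ring
  have localmin : IsLocalMin f 0 := by
    have hmem : Set.Ioo (-δ) δ ∈ 𝓝 (0:ℝ) := Ioo_mem_nhds (neg_lt_zero.mpr hδ) hδ
    refine Filter.eventually_of_mem hmem fun s hs => ?_
    rw [hf0]
    have := hineq s (abs_le.mpr ⟨le_of_lt hs.1, le_of_lt hs.2⟩)
    simp only [hf]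
    linarith
  have h2 : HasDerivAt (fun s : ℝ => c + s * D) D 0 := by
    simpa using ((hasDerivAt_id (0:ℝ)).mul_const D).const_add c
  have h3 : HasDerivAt (fun s : ℝ => (c + s * D) ^ k) ((k : ℝ) * c ^ (k - 1) * D) 0 := by
    simpa using h2.fun_pow k
  have hD : HasDerivAt f (S * c ^ (k - 1) - (k : ℝ) * c ^ (k - 1) * D) 0 :=
    (hP.mul_const _).sub h3
  have hzero := localmin.hasDerivAt_eq_zero hD
  linarith

lemma stepA (G : SimpleGraph V)
    (hwn : ∀ (H : Sym2 V → ℝ → ℝ → ℝ) (hs : ∀ e a b, H e a b = H e b a),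
      (∀ e, Measurable (Function.uncurry (H e))) → (∀ e, ∃ M, ∀ x y, |H e x y| ≤ M) →
      (∀ e x y, 0 ≤ H e x y) →
      tGm G H hs ^ G.edgeFinset.card ≤ ∏ e ∈ G.edgeFinset, tG G (H e) (hs e))
    (e₁ e₂ : Sym2 V) (he₁ : e₁ ∈ G.edgeFinset) (he₂ : e₂ ∈ G.edgeFinset)
    (W : ℝ → ℝ → ℝ) (Wsym : ∀ a b, W a b = W b a)
    (Wm : Measurable (Function.uncurry W)) (M : ℝ) (WM : ∀ a b, |W a b| ≤ M)
    (δ : ℝ) (hδ : 0 < δ) (Wge : ∀ a b, δ ≤ W a b) :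
    J (G.edgeFinset.erase e₁) W = J (G.edgeFinset.erase e₂) W := by
  have hc : 0 < J G.edgeFinset W :=
    lt_of_lt_of_le (pow_pos hδ _) (J_ge_pow _ W Wm ⟨M, WM⟩ δ hδ.le Wge)
  have hk : G.edgeFinset.card ≠ 0 := Finset.card_ne_zero.mpr ⟨e₁, he₁⟩
  have key : ∀ e ∈ G.edgeFinset,
      (G.edgeFinset.card : ℝ) * (J G.edgeFinset W) ^ (G.edgeFinset.card - 1) *
          J (G.edgeFinset.erase e) W
        = (∑ T ∈ G.edgeFinset.powerset,
            J T W * (((G.edgeFinset \ T).card : ℝ) * (0:ℝ) ^ ((G.edgeFinset \ T).card - 1))) *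
          (J G.edgeFinset W) ^ (G.edgeFinset.card - 1) := by
    intro e he
    refine deriv_step
      (fun s => ∑ T ∈ G.edgeFinset.powerset, J T W * s ^ ((G.edgeFinset \ T).card))
      (J G.edgeFinset W) (J (G.edgeFinset.erase e) W) G.edgeFinset.card _
      (HasDerivAt.fun_sum fun T _ => (hasDerivAt_pow _ 0).const_mul (J T W))
      (sum_pow_zero G.edgeFinset W) hk δ hδ
      (fun s hs => hoelder_ineq G hwn e he W Wsym Wm M WM δ hδ Wge s hs)
  have hpos : ((G.edgeFinset.card : ℝ) * (J G.edgeFinset W) ^ (G.edgeFinset.card - 1)) ≠ 0 :=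
    ne_of_gt (mul_pos (by exact_mod_cast Nat.pos_of_ne_zero hk) (pow_pos hc _))
  exact mul_left_cancel₀ hpos ((key e₁ he₁).trans (key e₂ he₂).symm)

lemma J_erase_eq (G : SimpleGraph V)
    (hwn : ∀ (H : Sym2 V → ℝ → ℝ → ℝ) (hs : ∀ e a b, H e a b = H e b a),
      (∀ e, Measurable (Function.uncurry (H e))) → (∀ e, ∃ M, ∀ x y, |H e x y| ≤ M) →
      (∀ e x y, 0 ≤ H e x y) →
      tGm G H hs ^ G.edgeFinset.card ≤ ∏ e ∈ G.edgeFinset, tG G (H e) (hs e))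
    (e₁ e₂ : Sym2 V) (he₁ : e₁ ∈ G.edgeFinset) (he₂ : e₂ ∈ G.edgeFinset)
    (h : ℝ → ℝ → ℝ) (hsym : ∀ a b, h a b = h b a)
    (hm : Measurable (Function.uncurry h)) (hb : ∃ M, ∀ x y, |h x y| ≤ M)
    (h0 : ∀ x y, 0 ≤ h x y) :
    J (G.edgeFinset.erase e₁) h = J (G.edgeFinset.erase e₂) h := by
  obtain ⟨M, hM⟩ := hb
  have main : ∀ δ : ℝ, 0 < δ →
      (∑ T ∈ (G.edgeFinset.erase e₁).powerset,
          J T h * δ ^ (((G.edgeFinset.erase e₁) \ T).card))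
        = ∑ T ∈ (G.edgeFinset.erase e₂).powerset,
            J T h * δ ^ (((G.edgeFinset.erase e₂) \ T).card) := by
    intro δ hδ
    have Wsym : ∀ a b, (fun a b => h a b + δ) a b = (fun a b => h a b + δ) b a := by
      intro a b; dsimp only; rw [hsym a b]
    have WM : ∀ a b, |h a b + δ| ≤ M + δ := by
      intro a b
      calc |h a b + δ| ≤ |h a b| + |δ| := abs_add_le _ _
        _ ≤ M + δ := by rw [abs_of_pos hδ]; exact add_le_add_left (hM a b) δ
    have Wge : ∀ a b, δ ≤ h a b + δ := fun a b => by linarith [h0 a b]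
    have := stepA G hwn e₁ e₂ he₁ he₂ (fun a b => h a b + δ) Wsym
      (hm.add_const δ) (M + δ) WM δ hδ Wge
    rwa [J_add_const _ h hm ⟨M, hM⟩ δ, J_add_const _ h hm ⟨M, hM⟩ δ] at this
  set g : ℝ → ℝ := fun δ =>
    (∑ T ∈ (G.edgeFinset.erase e₁).powerset,
        J T h * δ ^ (((G.edgeFinset.erase e₁) \ T).card))
      - ∑ T ∈ (G.edgeFinset.erase e₂).powerset,
          J T h * δ ^ (((G.edgeFinset.erase e₂) \ T).card) with hg
  have hcont : Continuous g :=
    (continuous_finset_sum _ fun T _ => continuous_const.mul (continuous_pow _)).sub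
      (continuous_finset_sum _ fun T _ => continuous_const.mul (continuous_pow _))
  have ht1 : Filter.Tendsto g (𝓝[>] (0:ℝ)) (𝓝 (g 0)) :=
    (hcont.tendsto 0).mono_left nhdsWithin_le_nhds
  have ht2 : Filter.Tendsto g (𝓝[>] (0:ℝ)) (𝓝 0) := by
    refine Filter.Tendsto.congr' ?_ tendsto_const_nhds
    filter_upwards [self_mem_nhdsWithin] with δ hδ
    exact (sub_eq_zero.mpr (main δ hδ)).symm
  have hg0 : g 0 = 0 := tendsto_nhds_unique ht1 ht2
  have : (J (G.edgeFinset.erase e₁) h) - (J (G.edgeFinset.erase e₂) h) = 0 := by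
    rw [← sum_pow_zero (G.edgeFinset.erase e₁) h, ← sum_pow_zero (G.edgeFinset.erase e₂) h]
    exact hg0
  linarith

end Aux


/-- if `G` is weakly norming and the Lovász uniqueness theorem holds
(graphs with equal densities on all nonnegative kernels are isomorphic), then all
single-edge deletions of `G` are pairwise isomorphic. -/
theorem deletions_isomorphic {V : Type} [Fintype V] (G : SimpleGraph V)
    (hwn : ∀ (H : Sym2 V → ℝ → ℝ → ℝ) (hs : ∀ e a b, H e a b = H e b a),
      (∀ e, Measurable (Function.uncurry (H e))) → (∀ e, ∃ M, ∀ x y, |H e x y| ≤ M) →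
      (∀ e x y, 0 ≤ H e x y) →
      tGm G H hs ^ G.edgeFinset.card ≤ ∏ e ∈ G.edgeFinset, tG G (H e) (hs e))
    (hLovasz : ∀ F F' : SimpleGraph V,
      (∀ (h : ℝ → ℝ → ℝ) (hsym : ∀ a b, h a b = h b a),
        Measurable (Function.uncurry h) → (∃ M, ∀ x y, |h x y| ≤ M) →
        (∀ x y, 0 ≤ h x y) → tG F h hsym = tG F' h hsym) →
      Nonempty (F ≃g F')) :
    ∀ e₁ ∈ G.edgeSet, ∀ e₂ ∈ G.edgeSet,
      Nonempty (G.deleteEdges {e₁} ≃g G.deleteEdges {e₂}) := by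
  intro e₁ he₁ e₂ he₂
  refine hLovasz _ _ fun h hsym hm hb h0 => ?_
  rw [tG_eq, tG_eq]
  convert J_erase_eq G hwn e₁ e₂ (SimpleGraph.mem_edgeFinset.mpr he₁)
    (SimpleGraph.mem_edgeFinset.mpr he₂) h hsym hm hb h0 using 2 <;>
    convert edgeFinset_delete G _ using 2
end
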